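/- Let q be a prime power, t ≥ 2 with t | q - 1, and let H ≤ F_q^× be the subgroup of order t. If α, β ∈ F_q with β ≠ 0 and α + β·h ∈ H for all h ∈ H, then α = 0 (and consequently β ∈ H, since β·h ∈ H for all h ∈ H forces β ∈ H). -/

import Mathlib

/-- Let `H = {x : x^t = 1}` be the multiplicative subgroup of `F_q^×` of order
`t` (where `t ≥ 2` and `t ∣ q - 1`). If `β ≠ 0` and `α + β·h ∈ H` for every `h ∈ H`, then
`α = 0` (and consequently `β ∈ H`). -/
theorem stmt_16 {F : Type*} [Field F] [Fintype F] (t : ℕ) (ht : 2 ≤ t)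
    (hdvd : t ∣ Fintype.card F - 1) (α β : F) (hβ : β ≠ 0)
    (h : ∀ x : F, x ^ t = 1 → (α + β * x) ^ t = 1) :
    α = 0 ∧ β ^ t = 1 := by
  classical
  have ht0 : 0 < t := by omega
  obtain ⟨g, hg⟩ := IsCyclic.exists_monoid_generator (α := Fˣ)
  have hordg : orderOf g = Fintype.card F - 1 := by
    rw [orderOf_eq_card_of_forall_mem_zpowers
      (fun x => mem_powers_iff_mem_zpowers.mp (hg x)), Nat.card_eq_fintype_card, Fintype.card_units]
  set ζ : Fˣ := g ^ ((Fintype.card F - 1) / t) with hζdef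
  have hordζ : orderOf ζ = t := by
    rw [hζdef, orderOf_pow, hordg]
    obtain ⟨c, hc⟩ := hdvd
    have hF2 := Fintype.one_lt_card (α := F)
    have hc0 : 0 < c := Nat.pos_of_ne_zero (by rintro rfl; omega)
    rw [hc, Nat.mul_div_cancel_left _ ht0, Nat.gcd_eq_right ⟨t, by ring⟩,
      Nat.mul_div_cancel _ hc0]
  have hprimU : IsPrimitiveRoot ζ t := hordζ ▸ IsPrimitiveRoot.orderOf ζ
  have hprim : IsPrimitiveRoot (ζ : F) t := hprimU.map_of_injective (f := Units.coeHom F) Units.coeHom_injective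
  set S := Polynomial.nthRootsFinset t (1 : F) with hS
  have hmem : ∀ x : F, x ∈ S ↔ x ^ t = 1 := fun x => Polynomial.mem_nthRootsFinset ht0 (1 : F)
  have hcardS : S.card = t := hprim.card_nthRootsFinset
  have hζne : (ζ : F) ≠ 0 := Units.ne_zero ζ
  have hζ1 : (ζ : F) ≠ 1 := by
    intro hc
    have h2 : orderOf (ζ : F) = t := hprim.eq_orderOf.symm
    rw [hc, orderOf_one] at h2
    omega
  -- sum over S is 0
  have hsum : ∑ x ∈ S, x = 0 := by
    have hmul : S.image (fun x => (ζ : F) * x) = S := by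
      apply Finset.eq_of_subset_of_card_le
      · intro y hy
        obtain ⟨x, hx, rfl⟩ := Finset.mem_image.mp hy
        rw [hmem, mul_pow, hprim.pow_eq_one, one_mul]
        exact (hmem x).mp hx
      · rw [Finset.card_image_of_injective _ (mul_right_injective₀ hζne)]
    have key : ∑ x ∈ S, x = ∑ x ∈ S, (ζ : F) * x := by
      conv_lhs => rw [← hmul]
      rw [Finset.sum_image (fun a _ b _ hab => mul_left_cancel₀ hζne hab)]
    rw [← Finset.mul_sum] at key
    have : ((ζ : F) - 1) * ∑ x ∈ S, x = 0 := by ring_nf; linear_combination -key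
    rcases mul_eq_zero.mp this with hc | hc
    · exact absurd (by linear_combination hc) hζ1
    · exact hc
  -- affine map is a bijection of S
  have himg : S.image (fun x => α + β * x) = S := by
    apply Finset.eq_of_subset_of_card_le
    · intro y hy
      obtain ⟨x, hx, rfl⟩ := Finset.mem_image.mp hy
      exact (hmem _).mpr (h x ((hmem x).mp hx))
    · rw [Finset.card_image_of_injective _ (fun a b hab => by
        simpa [hβ] using hab)]
  have key2 : ∑ x ∈ S, x = ∑ x ∈ S, (α + β * x) := by
    conv_lhs => rw [← himg]
    refine Finset.sum_image (fun a _ b _ hab => ?_)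
    have := add_left_cancel hab
    exact mul_left_cancel₀ hβ this
  rw [Finset.sum_add_distrib, ← Finset.mul_sum, hsum, Finset.sum_const, hcardS,
    nsmul_eq_mul, mul_zero, add_zero] at key2
  have htne : (t : F) ≠ 0 := by
    intro hc
    have hp := CharP.exists F
    obtain ⟨p, hp⟩ := hp
    have hprime : p.Prime := CharP.char_is_prime F p
    have hpt : p ∣ t := (CharP.cast_eq_zero_iff F p t).mp hc
    have hcard0 : ((Fintype.card F : F)) = 0 := FiniteField.cast_card_eq_zero F
    have hpcard : p ∣ Fintype.card F := (CharP.cast_eq_zero_iff F p _).mp hcard0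
    have hpq1 : p ∣ Fintype.card F - 1 := hpt.trans hdvd
    have : p ∣ 1 := by
      have hc1 : 1 ≤ Fintype.card F := Fintype.card_pos
      have := Nat.dvd_sub hpcard hpq1
      simpa [Nat.sub_sub_self hc1] using this
    exact hprime.one_lt.ne' (Nat.dvd_one.mp this)
  have hα : α = 0 := by
    have : (t : F) * α = 0 := key2.symm
    exact (mul_eq_zero.mp this).resolve_left htne
  refine ⟨hα, ?_⟩
  have := h 1 (one_pow t)
  simpa [hα] using this
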